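/- Let Y be a Banach space over 𝕂 ∈ {ℝ, ℂ} satisfying the local uniform convexity condition, let X be a nonzero closed linear subspace of Y, let J : X → Y denote the inclusion operator (Jx = x for all x ∈ X, so ‖J‖ = 1), and let A : X → Y be a compact linear operator. Then the following are equivalent: (i) A is norm-parallel to J, i.e. there exists λ with |λ| = 1 such that ‖A + λ·J‖ = ‖A‖ + 1; (ii) there exist λ with |λ| = 1 and a nonzero x ∈ X such that A x = λ·‖A‖·x, i.e. λ‖A‖ is an eigenvalue of A. -/

import Mathlib

open Filter Topology

set_option maxHeartbeats 2000000

theorem compact_parallel_to_inclusion_iff_eigenvalue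
    {𝕜 Y : Type*} [RCLike 𝕜] [NormedAddCommGroup Y] [NormedSpace 𝕜 Y] [CompleteSpace Y]
    (hY : ∀ y : Y, ‖y‖ = 1 → ∀ yn : ℕ → Y, (∀ n, ‖yn n‖ ≤ 1) →
      Tendsto (fun n => ‖yn n + y‖) atTop (𝓝 2) → Tendsto yn atTop (𝓝 y))
    (X : Subspace 𝕜 Y) (hXc : IsClosed (X : Set Y)) (hX0 : X ≠ ⊥)
    (A : X →L[𝕜] Y) (hA : IsCompactOperator A) :
    (∃ lam : 𝕜, ‖lam‖ = 1 ∧ ‖A + lam • X.subtypeL‖ = ‖A‖ + 1) ↔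
      ∃ (lam : 𝕜) (x : X), ‖lam‖ = 1 ∧ x ≠ 0 ∧ A x = (lam * (‖A‖ : 𝕜)) • (x : Y) := by
  constructor
  · rintro ⟨lam, hlam, hpar⟩
    have hlam0 : lam ≠ 0 := by
      intro h; rw [h] at hlam; simp at hlam
    by_cases hA0 : A = 0
    · obtain ⟨x, hxX, hx0⟩ := X.ne_bot_iff.mp hX0
      refine ⟨lam, ⟨x, hxX⟩, hlam, ?_, ?_⟩
      · simpa [Submodule.mk_eq_zero] using hx0
      · simp [hA0, ContinuousLinearMap.opNorm_zero]
    · have hApos : (0:ℝ) < ‖A‖ := (A.opNorm_zero_iff.ne.mpr hA0).lt_of_le' (norm_nonneg A)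
      set T := A + lam • X.subtypeL with hTdef
      have hTx_eq : ∀ v : X, T v = A v + lam • (v : Y) := fun v => by
        simp [hTdef, Submodule.subtypeL_apply]
      -- norming sequence
      have key : ∀ n : ℕ, ∃ v : X, ‖v‖ < 1 ∧ ‖T‖ - ((n:ℝ)+1)⁻¹ < ‖T v‖ := by
        intro n
        have h1 : ‖T‖ - ((n:ℝ)+1)⁻¹ < ‖T‖ := by
          have : (0:ℝ) < ((n:ℝ)+1)⁻¹ := by positivity
          linarith
        exact T.exists_lt_apply_of_lt_opNorm h1
      choose v hv1 hv2 using key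
      have hvle : ∀ n, ‖v n‖ ≤ 1 := fun n => (hv1 n).le
      have hTv : Tendsto (fun n => ‖T (v n)‖) atTop (𝓝 ‖T‖) := by
        have hlow : Tendsto (fun n : ℕ => ‖T‖ - ((n:ℝ)+1)⁻¹) atTop (𝓝 (‖T‖ - 0)) := by
          refine Tendsto.sub tendsto_const_nhds ?_
          simpa [one_div] using tendsto_one_div_add_atTop_nhds_zero_nat (𝕜 := ℝ)
        rw [sub_zero] at hlow
        refine tendsto_of_tendsto_of_tendsto_of_le_of_le hlow tendsto_const_nhds
          (fun n => (hv2 n).le) (fun n => ?_)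
        calc ‖T (v n)‖ ≤ ‖T‖ * ‖v n‖ := T.le_opNorm _
          _ ≤ ‖T‖ * 1 := by
              exact mul_le_mul_of_nonneg_left (hvle n) (norm_nonneg T)
          _ = ‖T‖ := mul_one _
      -- compactness: convergent subsequence of A (v n)
      have hA' : IsCompactOperator (A : X →ₗ[𝕜] Y) := hA
      have hK : IsCompact (closure ((A : X →ₗ[𝕜] Y) '' Metric.closedBall 0 1)) :=
        hA'.isCompact_closure_image_closedBall 1
      have hmem : ∀ n, A (v n) ∈ closure ((A : X →ₗ[𝕜] Y) '' Metric.closedBall 0 1) := by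
        intro n
        exact subset_closure ⟨v n, by simpa [Metric.mem_closedBall] using hvle n, rfl⟩
      obtain ⟨y, -, φ, hφ, hy⟩ := hK.tendsto_subseq hmem
      set u : ℕ → X := fun n => v (φ n) with hu
      have hule : ∀ n, ‖u n‖ ≤ 1 := fun n => hvle _
      have hy' : Tendsto (fun n => A (u n)) atTop (𝓝 y) := hy
      have hTu : Tendsto (fun n => ‖T (u n)‖) atTop (𝓝 ‖T‖) :=
        hTv.comp hφ.tendsto_atTop
      -- ‖A (u n)‖ → ‖A‖
      have hnormAu : Tendsto (fun n => ‖A (u n)‖) atTop (𝓝 ‖A‖) := by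
        have hlow : Tendsto (fun n => ‖T (u n)‖ - 1) atTop (𝓝 (‖T‖ - 1)) :=
          hTu.sub tendsto_const_nhds
        rw [hpar, add_sub_cancel_right] at hlow
        refine tendsto_of_tendsto_of_tendsto_of_le_of_le hlow tendsto_const_nhds
          (fun n => ?_) (fun n => ?_)
        · have h1 : ‖T (u n)‖ ≤ ‖A (u n)‖ + ‖lam • ((u n : Y))‖ := by
            rw [hTx_eq]; exact norm_add_le _ _
          have h2 : ‖lam • ((u n : Y))‖ ≤ 1 := by
            rw [norm_smul, hlam, one_mul]
            exact hule n
          linarith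
        · calc ‖A (u n)‖ ≤ ‖A‖ * ‖u n‖ := A.le_opNorm _
            _ ≤ ‖A‖ * 1 := mul_le_mul_of_nonneg_left (hule n) (norm_nonneg A)
            _ = ‖A‖ := mul_one _
      have hynorm : ‖y‖ = ‖A‖ :=
        tendsto_nhds_unique (hy'.norm) hnormAu
      have hAK0 : ((‖A‖ : 𝕜)) ≠ 0 := by
        simpa using hApos.ne'
      set z : Y := ((‖A‖ : 𝕜))⁻¹ • y with hz
      have hznorm : ‖z‖ = 1 := by
        rw [hz, norm_smul, norm_inv, RCLike.norm_ofReal, abs_of_pos hApos, hynorm]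
        field_simp
      set w : ℕ → Y := fun n => lam • ((u n : Y)) with hw
      have hwle : ∀ n, ‖w n‖ ≤ 1 := by
        intro n; rw [hw]; simp only []
        rw [norm_smul, hlam, one_mul]; exact hule n
      -- key: ‖w n + z‖ → 2
      have hAun_le : ∀ n, ‖A (u n)‖ ≤ ‖A‖ := fun n => by
        calc ‖A (u n)‖ ≤ ‖A‖ * ‖u n‖ := A.le_opNorm _
          _ ≤ ‖A‖ * 1 := mul_le_mul_of_nonneg_left (hule n) (norm_nonneg A)
          _ = ‖A‖ := mul_one _
      have hcinv : ((‖A‖:𝕜))⁻¹ = ((‖A‖⁻¹ : ℝ) : 𝕜) := by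
        rw [RCLike.ofReal_inv]
      have hcinvnorm : ‖((‖A‖:𝕜))⁻¹‖ = ‖A‖⁻¹ := by
        rw [hcinv, RCLike.norm_ofReal, abs_of_pos (by positivity)]
      have hTwu : ∀ n, T (u n) = A (u n) + w n := fun n => hTx_eq (u n)
      have hub : ∀ n, ‖w n + ((‖A‖:𝕜))⁻¹ • A (u n)‖ ≤ 2 := by
        intro n
        have h1 := norm_add_le (w n) (((‖A‖:𝕜))⁻¹ • A (u n))
        have h2 : ‖((‖A‖:𝕜))⁻¹ • A (u n)‖ ≤ 1 := by
          rw [norm_smul, hcinvnorm]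
          rw [inv_mul_le_iff₀ hApos, mul_one]
          exact hAun_le n
        have := hwle n
        linarith
      have hinner : Tendsto (fun n => ‖w n + ((‖A‖:𝕜))⁻¹ • A (u n)‖) atTop (𝓝 2) := by
        rcases le_total ‖A‖ 1 with hc | hc
        · have hlow : Tendsto (fun n => (‖T (u n)‖ - (1 - ‖A‖)) / ‖A‖) atTop
              (𝓝 ((‖T‖ - (1 - ‖A‖)) / ‖A‖)) :=
            (hTu.sub tendsto_const_nhds).div_const _
          rw [hpar, show (‖A‖ + 1 - (1 - ‖A‖)) / ‖A‖ = 2 by field_simp; ring] at hlow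
          refine tendsto_of_tendsto_of_tendsto_of_le_of_le hlow tendsto_const_nhds
            (fun n => ?_) hub
          have heq : (‖A‖:𝕜) • (w n + ((‖A‖:𝕜))⁻¹ • A (u n))
              = T (u n) - ((1:𝕜) - (‖A‖:𝕜)) • w n := by
            rw [hTwu n, smul_add, smul_inv_smul₀ hAK0]
            module
          have hn1 : ‖(‖A‖:𝕜) • (w n + ((‖A‖:𝕜))⁻¹ • A (u n))‖
              = ‖A‖ * ‖w n + ((‖A‖:𝕜))⁻¹ • A (u n)‖ := by
            rw [norm_smul, RCLike.norm_ofReal, abs_of_pos hApos]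
          have hn2 : ‖((1:𝕜) - (‖A‖:𝕜)) • w n‖ ≤ 1 - ‖A‖ := by
            rw [norm_smul, show (1:𝕜) - (‖A‖:𝕜) = ((1 - ‖A‖ : ℝ) : 𝕜) by push_cast; ring,
              RCLike.norm_ofReal, abs_of_nonneg (by linarith)]
            calc (1 - ‖A‖) * ‖w n‖ ≤ (1 - ‖A‖) * 1 :=
                mul_le_mul_of_nonneg_left (hwle n) (by linarith)
              _ = 1 - ‖A‖ := mul_one _
          have hn3 : ‖T (u n)‖ - ‖((1:𝕜) - (‖A‖:𝕜)) • w n‖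
              ≤ ‖T (u n) - ((1:𝕜) - (‖A‖:𝕜)) • w n‖ := norm_sub_norm_le _ _
          rw [← heq, hn1] at hn3
          rw [div_le_iff₀ hApos, mul_comm]
          linarith
        · have hlow : Tendsto (fun n => ‖T (u n)‖ - (‖A‖ - 1)) atTop
              (𝓝 (‖T‖ - (‖A‖ - 1))) := hTu.sub tendsto_const_nhds
          rw [hpar, show ‖A‖ + 1 - (‖A‖ - 1) = 2 by ring] at hlow
          refine tendsto_of_tendsto_of_tendsto_of_le_of_le hlow tendsto_const_nhds
            (fun n => ?_) hub
          have heq : w n + ((‖A‖:𝕜))⁻¹ • A (u n)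
              = T (u n) - ((1:𝕜) - ((‖A‖:𝕜))⁻¹) • A (u n) := by
            rw [hTwu]; module
          have hn2 : ‖((1:𝕜) - ((‖A‖:𝕜))⁻¹) • A (u n)‖ ≤ ‖A‖ - 1 := by
            rw [norm_smul, hcinv,
              show (1:𝕜) - ((‖A‖⁻¹:ℝ):𝕜) = ((1 - ‖A‖⁻¹ : ℝ) : 𝕜) by push_cast; ring,
              RCLike.norm_ofReal]
            have hinv1 : ‖A‖⁻¹ ≤ 1 := by
              rw [inv_le_one_iff₀]; right; exact hc
            have hinvc : ‖A‖⁻¹ * ‖A‖ = 1 := inv_mul_cancel₀ hApos.ne'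
            rw [abs_of_nonneg (by linarith)]
            have := hAun_le n
            nlinarith [norm_nonneg (A (u n))]
          have hn3 : ‖T (u n)‖ - ‖((1:𝕜) - ((‖A‖:𝕜))⁻¹) • A (u n)‖
              ≤ ‖T (u n) - ((1:𝕜) - ((‖A‖:𝕜))⁻¹) • A (u n)‖ := norm_sub_norm_le _ _
          rw [← heq] at hn3
          linarith
      have herr : Tendsto (fun n => ‖((‖A‖:𝕜))⁻¹ • (y - A (u n))‖) atTop (𝓝 0) := by
        have h1 : Tendsto (fun n => y - A (u n)) atTop (𝓝 (y - y)) :=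
          tendsto_const_nhds.sub hy'
        rw [sub_self] at h1
        have h2 := (h1.const_smul (((‖A‖:𝕜))⁻¹)).norm
        simpa using h2
      have hdecomp : ∀ n, w n + z
          = (w n + ((‖A‖:𝕜))⁻¹ • A (u n)) + ((‖A‖:𝕜))⁻¹ • (y - A (u n)) := by
        intro n
        rw [hz]; module
      have hkey : Tendsto (fun n => ‖w n + z‖) atTop (𝓝 2) := by
        have hlow : Tendsto (fun n => ‖w n + ((‖A‖:𝕜))⁻¹ • A (u n)‖
            - ‖((‖A‖:𝕜))⁻¹ • (y - A (u n))‖) atTop (𝓝 (2 - 0)) := hinner.sub herr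
        have hhigh : Tendsto (fun n => ‖w n + ((‖A‖:𝕜))⁻¹ • A (u n)‖
            + ‖((‖A‖:𝕜))⁻¹ • (y - A (u n))‖) atTop (𝓝 (2 + 0)) := hinner.add herr
        rw [sub_zero] at hlow
        rw [add_zero] at hhigh
        refine tendsto_of_tendsto_of_tendsto_of_le_of_le hlow hhigh (fun n => ?_) (fun n => ?_)
        · have h1 : ‖w n + ((‖A‖:𝕜))⁻¹ • A (u n)‖
              ≤ ‖w n + z‖ + ‖((‖A‖:𝕜))⁻¹ • (y - A (u n))‖ := by
            calc ‖w n + ((‖A‖:𝕜))⁻¹ • A (u n)‖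
                = ‖(w n + z) - ((‖A‖:𝕜))⁻¹ • (y - A (u n))‖ := by
                  congr 1
                  rw [hz, smul_sub]
                  abel
              _ ≤ ‖w n + z‖ + ‖((‖A‖:𝕜))⁻¹ • (y - A (u n))‖ := norm_sub_le _ _
          linarith
        · calc ‖w n + z‖
              ≤ ‖w n + ((‖A‖:𝕜))⁻¹ • A (u n)‖ + ‖((‖A‖:𝕜))⁻¹ • (y - A (u n))‖ := by
                rw [hdecomp n]; exact norm_add_le _ _
            _ = _ := rfl
      have hwz : Tendsto w atTop (𝓝 z) := hY z hznorm w hwle hkey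
      -- limit point
      have hcoe : Tendsto (fun n => (u n : Y)) atTop (𝓝 (lam⁻¹ • z)) := by
        have : Tendsto (fun n => lam⁻¹ • w n) atTop (𝓝 (lam⁻¹ • z)) :=
          hwz.const_smul _
        simpa [hw, smul_smul, inv_mul_cancel₀ hlam0] using this
      have hmemX : lam⁻¹ • z ∈ X :=
        hXc.mem_of_tendsto hcoe (Eventually.of_forall fun n => (u n).2)
      set x₀ : X := ⟨lam⁻¹ • z, hmemX⟩ with hx₀
      have hux₀ : Tendsto u atTop (𝓝 x₀) := by
        rw [tendsto_subtype_rng]; exact hcoe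
      have hAx₀ : A x₀ = y :=
        tendsto_nhds_unique ((A.continuous.tendsto _).comp hux₀) hy'
      refine ⟨lam, x₀, hlam, ?_, ?_⟩
      · intro h
        have : ‖(x₀ : Y)‖ = 0 := by rw [h]; simp
        rw [hx₀] at this
        simp only [norm_smul, norm_inv, hlam, hznorm] at this
        norm_num at this
      · rw [hAx₀, hx₀]
        show y = (lam * (‖A‖ : 𝕜)) • (lam⁻¹ • z)
        rw [hz, smul_smul, smul_smul]
        rw [show lam * (‖A‖:𝕜) * lam⁻¹ * ((‖A‖:𝕜))⁻¹ = 1 by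
          field_simp]
        rw [one_smul]
  · rintro ⟨lam, x, hlam, hx0, heig⟩
    refine ⟨lam, hlam, le_antisymm ?_ ?_⟩
    · calc ‖A + lam • X.subtypeL‖ ≤ ‖A‖ + ‖lam • X.subtypeL‖ :=
          ContinuousLinearMap.opNorm_add_le _ _
        _ ≤ ‖A‖ + 1 := by
            have h2 : ‖lam • X.subtypeL‖ ≤ ‖lam‖ * ‖X.subtypeL‖ :=
              ContinuousLinearMap.opNorm_smul_le _ _
            have h3 := Submodule.norm_subtypeL_le X
            rw [hlam, one_mul] at h2
            linarith
    · have hxpos : (0:ℝ) < ‖x‖ := norm_pos_iff.mpr hx0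
      have happ : (A + lam • X.subtypeL) x = (lam * ((‖A‖:𝕜) + 1)) • (x : Y) := by
        simp only [ContinuousLinearMap.add_apply, ContinuousLinearMap.smul_apply,
          Submodule.subtypeL_apply, heig]
        rw [mul_add, add_smul, mul_one, mul_smul]
      have hnorm : ‖(A + lam • X.subtypeL) x‖ = (‖A‖ + 1) * ‖x‖ := by
        rw [happ, norm_smul, norm_mul, hlam, one_mul]
        have : ‖((‖A‖:𝕜) + 1)‖ = ‖A‖ + 1 := by
          rw [show ((‖A‖:𝕜) + 1) = ((‖A‖ + 1 : ℝ) : 𝕜) by push_cast; ring,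
            RCLike.norm_ofReal, abs_of_nonneg (by positivity)]
        rw [this]
        rfl
      have := (A + lam • X.subtypeL).le_opNorm x
      rw [hnorm] at this
      exact le_of_mul_le_mul_right (by linarith) hxpos
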